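/- arXiv:2605.16782 — 4 statements merged into one kernel-verified Lean document; each statement's English description precedes it below -/
import Mathlib

section
/- If a real symmetric 2×2 matrix Y and real 2×2 matrix X satisfy the complex matrix inequality Y + iΩ ≥ iXΩXᵀ (as Hermitian matrices), then Y is positive semidefinite. -/
open Matrix Complex
open scoped ComplexOrder

theorem uncertainty_implies_Y_psd
    (X Y : Matrix (Fin 2) (Fin 2) ℝ) (hYsym : Y.IsSymm)
    (Ω : Matrix (Fin 2) (Fin 2) ℝ) (hΩ : Ω = !![0, 1; -1, 0])
    (h : (Y.map (fun x : ℝ => (x : ℂ)) + Complex.I • Ω.map (fun x : ℝ => (x : ℂ))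
          - Complex.I • (X * Ω * Xᵀ).map (fun x : ℝ => (x : ℂ))).PosSemidef) :
    Y.PosSemidef := by
  subst hΩ
  refine Matrix.PosSemidef.of_dotProduct_mulVec_nonneg ?_ ?_
  · exact hYsym
  · intro x
    have h2 := h.dotProduct_mulVec_nonneg (fun i => (x i : ℂ))
    rw [Complex.le_def] at h2
    obtain ⟨hre, him⟩ := h2
    simp [Matrix.mulVec, dotProduct, Fin.sum_univ_two, Matrix.mul_apply,
      Matrix.map_apply, Complex.ext_iff] at hre ⊢
    nlinarith [hre]
end

section
/- The classical CLT at the level of characteristic functions: if φ : ℝ → ℂ is the characteristic function of a centered real random variable with finite variance σ², then for every t ∈ ℝ, φ(t/√n)^n converges to exp(-σ²t²/2) as n → ∞. -/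
open MeasureTheory Filter Complex Topology

noncomputable def Kfun (s x : ℝ) : ℂ :=
  Complex.exp ((s : ℂ) * (x : ℂ) * Complex.I) - 1 - (s : ℂ) * (x : ℂ) * Complex.I
    + ((s : ℂ) * (x : ℂ))^2 / 2

lemma abs_sxI (s x : ℝ) : ‖(s : ℂ) * (x : ℂ) * Complex.I‖ = |s * x| := by
  rw [norm_mul, norm_mul, Complex.norm_I, Complex.norm_real, Complex.norm_real,
    mul_one, Real.norm_eq_abs, Real.norm_eq_abs, abs_mul]

lemma Kfun_cubic {s x : ℝ} (h : |s * x| ≤ 1) :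
    ‖Kfun s x‖ ≤ (2/9) * |s * x|^3 := by
  have h0 : ‖(s : ℂ) * (x : ℂ) * Complex.I‖ ≤ 1 := by
    rw [abs_sxI]; exact h
  have this := Complex.exp_bound h0 (n := 3) (by norm_num)
  have hsum : (∑ m ∈ Finset.range 3, ((s : ℂ) * (x : ℂ) * Complex.I) ^ m / m.factorial)
      = 1 + (s : ℂ) * (x : ℂ) * Complex.I - ((s : ℂ) * (x : ℂ))^2 / 2 := by
    simp [Finset.sum_range_succ, Nat.factorial]
    ring_nf
    simp [Complex.I_sq]
    ring
  rw [hsum, abs_sxI] at this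
  have h3 : |s * x| ^ 3 * ((3+1 : ℝ) * (((3:ℕ).factorial : ℝ) * 3 : ℝ)⁻¹)
      ≤ (2/9) * |s * x|^3 := by
    rw [mul_comm]
    gcongr
    norm_num [Nat.factorial]
  refine le_trans (le_of_eq ?_) (le_trans (le_of_le_of_eq this (by norm_num)) h3)
  congr 1
  unfold Kfun; ring

lemma Kfun_quad (s x : ℝ) : ‖Kfun s x‖ ≤ 4 * (s * x)^2 := by
  rcases le_or_gt (|s * x|) 1 with h | h
  · refine (Kfun_cubic h).trans ?_
    have h3 : |s * x|^3 = |s*x| * (s*x)^2 := by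
      rw [pow_succ']; congr 1; exact _root_.sq_abs _
    rw [h3]
    nlinarith [sq_nonneg (s*x), abs_nonneg (s*x)]
  · have h1 : (1:ℝ) ≤ (s*x)^2 := by nlinarith [abs_nonneg (s*x), _root_.sq_abs (s*x)]
    have h2 : |s*x| ≤ (s*x)^2 := by nlinarith [abs_nonneg (s*x), _root_.sq_abs (s*x)]
    have he : ‖Complex.exp ((s : ℂ) * (x : ℂ) * Complex.I)‖ = 1 := by
      rw [Complex.norm_exp]
      norm_num [Complex.mul_re, Complex.I_re, Complex.I_im]
    have hq : ‖((s : ℂ) * (x : ℂ))^2 / 2‖ = (s*x)^2 / 2 := by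
      rw [norm_div, norm_pow, norm_mul, Complex.norm_real, Complex.norm_real]
      norm_num [← abs_mul, _root_.sq_abs]
    calc ‖Kfun s x‖
        ≤ ‖Complex.exp ((s : ℂ) * (x : ℂ) * Complex.I)‖ + ‖(1:ℂ)‖
          + ‖(s : ℂ) * (x : ℂ) * Complex.I‖
          + ‖((s : ℂ) * (x : ℂ))^2 / 2‖ := by
          unfold Kfun
          refine (norm_add_le _ _).trans ?_
          gcongr
          refine (norm_sub_le _ _).trans ?_
          gcongr
          exact norm_sub_le _ _
      _ ≤ 1 + 1 + (s*x)^2 + (s*x)^2/2 := by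
          rw [he, hq, abs_sxI, norm_one]; gcongr
      _ ≤ 4 * (s*x)^2 := by nlinarith

lemma tendsto_pow_exp_of_mul_sub_one {z : ℕ → ℂ} {c : ℂ}
    (h : Tendsto (fun n : ℕ => (n : ℂ) * (z n - 1)) atTop (𝓝 c)) :
    Tendsto (fun n : ℕ => z n ^ n) atTop (𝓝 (Complex.exp c)) := by
  have hinv : Tendsto (fun n : ℕ => ((n : ℂ))⁻¹) atTop (𝓝 0) := by
    have : Tendsto (fun n : ℕ => ((n : ℝ))⁻¹) atTop (𝓝 0) :=
      tendsto_inv_atTop_zero.comp tendsto_natCast_atTop_atTop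
    have h2 := (Complex.continuous_ofReal.tendsto 0).comp this
    simp only [Complex.ofReal_zero] at h2
    refine h2.congr fun n => ?_
    simp [Function.comp]
  have hz1 : Tendsto z atTop (𝓝 1) := by
    have h2 : Tendsto (fun n : ℕ => (n : ℂ) * (z n - 1) * ((n:ℂ))⁻¹) atTop (𝓝 (c * 0)) :=
      h.mul hinv
    rw [mul_zero] at h2
    have h3 : Tendsto (fun n : ℕ => z n - 1) atTop (𝓝 0) := by
      refine h2.congr' ?_
      filter_upwards [eventually_ge_atTop 1] with n hn
      have : (n : ℂ) ≠ 0 := Nat.cast_ne_zero.mpr (by omega)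
      field_simp
    have := h3.add_const 1
    simpa using this
  set g : ℂ → ℂ := fun w => if w = 1 then 1 else Complex.log w / (w - 1) with hg_def
  have hg : Tendsto g (𝓝 1) (𝓝 1) := by
    have hd : HasDerivAt Complex.log 1 1 := by
      simpa using Complex.hasDerivAt_log Complex.one_mem_slitPlane
    have hslope := hasDerivAt_iff_tendsto_slope.mp hd
    have hgw : Tendsto g (𝓝[≠] (1:ℂ)) (𝓝 1) := by
      refine hslope.congr' ?_
      filter_upwards [self_mem_nhdsWithin] with w hw
      simp only [Set.mem_compl_iff, Set.mem_singleton_iff] at hw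
      simp [slope, g, hw, Complex.log_one, div_eq_inv_mul]
    have h1 : Tendsto g (𝓝[≠] (1:ℂ) ⊔ pure 1) (𝓝 1) := by
      rw [tendsto_sup]
      exact ⟨hgw, by simpa only [show g 1 = 1 from if_pos rfl] using tendsto_pure_nhds g 1⟩
    rwa [nhdsNE_sup_pure] at h1
  have hkey : ∀ n : ℕ, (n : ℂ) * Complex.log (z n) = ((n : ℂ) * (z n - 1)) * g (z n) := by
    intro n
    by_cases hzn : z n = 1
    · simp [hzn, g]
    · have : z n - 1 ≠ 0 := sub_ne_zero.mpr hzn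
      simp only [g, if_neg hzn]
      field_simp
  have hlog : Tendsto (fun n : ℕ => (n : ℂ) * Complex.log (z n)) atTop (𝓝 c) := by
    have := h.mul (hg.comp hz1)
    rw [mul_one] at this
    exact this.congr fun n => (hkey n).symm
  have hexp := (Complex.continuous_exp.tendsto c).comp hlog
  refine hexp.congr' ?_
  filter_upwards [hz1.eventually (isOpen_compl_singleton.eventually_mem
    (by norm_num : (1:ℂ) ∈ ({0}ᶜ : Set ℂ)))] with n hn
  simp only [Set.mem_compl_iff, Set.mem_singleton_iff] at hn
  rw [Function.comp_apply, ← Complex.exp_log hn, ← Complex.exp_nat_mul, Complex.exp_log hn]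

lemma Kfun_continuous (s : ℝ) : Continuous (Kfun s) := by
  unfold Kfun
  fun_prop

section main
variable (μ : Measure ℝ) [IsProbabilityMeasure μ]

lemma integral_Kfun (σ : ℝ)
    (hmean : ∫ x, x ∂μ = 0)
    (hint : Integrable (fun x => x^2) μ)
    (hvar : ∫ x, x^2 ∂μ = σ^2) (s : ℝ) :
    ∫ x, Kfun s x ∂μ
      = (∫ x, Complex.exp ((s : ℂ) * (x : ℂ) * Complex.I) ∂μ) - 1 + ((s^2 * σ^2 / 2 : ℝ) : ℂ) := by
  have hx1 : Integrable (fun x : ℝ => x) μ := by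
    refine MemLp.integrable one_le_two ?_
    exact (memLp_two_iff_integrable_sq measurable_id.aestronglyMeasurable).2 hint
  have hI1 : Integrable (fun x : ℝ => Complex.exp ((s : ℂ) * (x : ℂ) * Complex.I)) μ := by
    refine Integrable.mono' (integrable_const 1) ?_ ?_
    · exact ((Complex.continuous_exp.comp (by fun_prop))).aestronglyMeasurable
    · refine Filter.Eventually.of_forall fun x => ?_
      rw [Complex.norm_exp]
      norm_num [Complex.mul_re, Complex.I_re, Complex.I_im]
  have hI2 : Integrable (fun x : ℝ => (s : ℂ) * (x : ℂ) * Complex.I) μ :=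
    ((hx1.ofReal (𝕜 := ℂ)).const_mul (s : ℂ)).mul_const Complex.I
  have hI3 : Integrable (fun x : ℝ => ((s : ℂ) * (x : ℂ))^2 / 2) μ := by
    have h := ((hint.ofReal (𝕜 := ℂ)).const_mul ((s : ℂ)^2 / 2))
    have he : (fun x : ℝ => ((s : ℂ) * (x : ℂ))^2 / 2)
        = fun x : ℝ => ((s : ℂ)^2 / 2) * ((x^2 : ℝ) : ℂ) := by
      funext x; push_cast; ring
    rw [he]; exact h
  have hfg : Integrable
      (fun x : ℝ => Complex.exp ((s : ℂ) * (x : ℂ) * Complex.I) - 1 - (s : ℂ) * (x : ℂ) * Complex.I) μ :=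
    (hI1.sub (integrable_const 1)).sub hI2
  have hfg1 : Integrable
      (fun x : ℝ => Complex.exp ((s : ℂ) * (x : ℂ) * Complex.I) - 1) μ :=
    hI1.sub (integrable_const 1)
  unfold Kfun
  rw [integral_add hfg hI3, integral_sub hfg1 hI2, integral_sub hI1 (integrable_const 1)]
  have e2 : ∫ x : ℝ, (s : ℂ) * (x : ℂ) * Complex.I ∂μ = 0 := by
    have : (fun x : ℝ => (s : ℂ) * (x : ℂ) * Complex.I)
        = fun x : ℝ => ((s : ℂ) * Complex.I) * ((x : ℝ) : ℂ) := by
      funext x; ring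
    have h0 : ∫ a : ℝ, ((a : ℝ) : ℂ) ∂μ = ((∫ a : ℝ, a ∂μ : ℝ) : ℂ) := by
      exact_mod_cast integral_ofReal (f := fun a : ℝ => a) (𝕜 := ℂ)
    rw [this, integral_const_mul, h0, hmean]
    simp
  have e3 : ∫ x : ℝ, ((s : ℂ) * (x : ℂ))^2 / 2 ∂μ = ((s^2 * σ^2 / 2 : ℝ) : ℂ) := by
    have : (fun x : ℝ => ((s : ℂ) * (x : ℂ))^2 / 2)
        = fun x : ℝ => ((s : ℂ)^2 / 2) * ((x^2 : ℝ) : ℂ) := by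
      funext x; push_cast; ring
    have h0 : ∫ a : ℝ, ((a^2 : ℝ) : ℂ) ∂μ = ((∫ a : ℝ, a^2 ∂μ : ℝ) : ℂ) := by
      exact integral_ofReal (f := fun a : ℝ => a^2) (𝕜 := ℂ)
    rw [this, integral_const_mul, h0, hvar]
    push_cast; ring
  rw [e2, e3]
  simp

lemma key_tendsto (σ t : ℝ)
    (hmean : ∫ x, x ∂μ = 0)
    (hint : Integrable (fun x => x^2) μ)
    (hvar : ∫ x, x^2 ∂μ = σ^2)
    (φ : ℝ → ℂ) (hφ : ∀ t : ℝ, φ t = ∫ x, Complex.exp ((t : ℂ) * (x : ℂ) * Complex.I) ∂μ) :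
    Tendsto (fun n : ℕ => (n : ℂ) * (φ (t / Real.sqrt n) - 1)) atTop
      (𝓝 (-((σ^2 * t^2 : ℝ) : ℂ) / 2)) := by
  set s : ℕ → ℝ := fun n => t / Real.sqrt n with hs_def
  have hsqrtR : Tendsto Real.sqrt atTop atTop := by
    refine (tendsto_rpow_atTop (y := (1:ℝ)/2) (by norm_num)).congr' ?_
    filter_upwards [eventually_ge_atTop (0:ℝ)] with x hx
    exact (Real.sqrt_eq_rpow x).symm
  have hsqrt : Tendsto (fun n : ℕ => Real.sqrt n) atTop atTop :=
    hsqrtR.comp tendsto_natCast_atTop_atTop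
  have hs0 : Tendsto s atTop (𝓝 0) := tendsto_const_nhds.div_atTop hsqrt
  -- squared identity
  have hsq : ∀ n : ℕ, 1 ≤ n → (n : ℝ) * (s n)^2 = t^2 := by
    intro n hn
    have hn0 : (0:ℝ) < n := by exact_mod_cast hn
    rw [hs_def]
    simp only [div_pow, Real.sq_sqrt (le_of_lt hn0)]
    field_simp
  -- the integral term tends to zero
  have hKlim : Tendsto (fun n : ℕ => (n : ℂ) * ∫ x, Kfun (s n) x ∂μ) atTop (𝓝 0) := by
    have hDCT : Tendsto (fun n : ℕ => ∫ x, (n : ℂ) * Kfun (s n) x ∂μ) atTop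
        (𝓝 (∫ _ : ℝ, (0:ℂ) ∂μ)) := by
      refine tendsto_integral_of_dominated_convergence (fun x => 4 * t^2 * x^2)
        (fun n => (continuous_const.mul (Kfun_continuous (s n))).aestronglyMeasurable)
        ?_ ?_ ?_
      · exact (hint.const_mul (4 * t^2)).congr (Filter.Eventually.of_forall fun x => by ring)
      · intro n
        refine Filter.Eventually.of_forall fun x => ?_
        rcases Nat.eq_zero_or_pos n with h0 | h1
        · subst h0; simp; positivity
        · rw [norm_mul, Complex.norm_natCast]
          calc (n : ℝ) * ‖Kfun (s n) x‖
              ≤ (n : ℝ) * (4 * (s n * x)^2) := by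
                gcongr
                exact Kfun_quad (s n) x
            _ = 4 * ((n:ℝ) * (s n)^2) * x^2 := by ring
            _ = 4 * t^2 * x^2 := by rw [hsq n h1]
      · refine Filter.Eventually.of_forall fun x => ?_
        have hg0 : Tendsto (fun n : ℕ => (2/9) * |t|^3 * |x|^3 / Real.sqrt n) atTop (𝓝 0) :=
          tendsto_const_nhds.div_atTop hsqrt
        refine squeeze_zero_norm' ?_ hg0
        · have hev : ∀ᶠ n : ℕ in atTop, |s n * x| ≤ 1 := by
            have h1 : Tendsto (fun n : ℕ => |s n * x|) atTop (𝓝 |0 * x|) :=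
              ((hs0.mul_const x).abs)
            rw [zero_mul, abs_zero] at h1
            exact (h1.eventually_lt_const one_pos).mono fun n h => le_of_lt h
          filter_upwards [hev, eventually_ge_atTop 1] with n hn h1
          have hn0 : (0:ℝ) < n := by exact_mod_cast h1
          have hsn : Real.sqrt n > 0 := Real.sqrt_pos.2 hn0
          rw [norm_mul, Complex.norm_natCast]
          calc (n : ℝ) * ‖Kfun (s n) x‖
              ≤ (n : ℝ) * ((2/9) * |s n * x|^3) := by
                gcongr
                exact Kfun_cubic hn
            _ = (2/9) * |x|^3 * ((n : ℝ) * |s n|^3) := by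
                rw [abs_mul, mul_pow]; ring
            _ = (2/9) * |t|^3 * |x|^3 / Real.sqrt n := by
                have h3 : (Real.sqrt n)^3 = (n:ℝ) * Real.sqrt n := by
                  rw [pow_succ, Real.sq_sqrt hn0.le]
                rw [hs_def]
                simp only [abs_div, div_pow]
                rw [_root_.abs_of_nonneg (Real.sqrt_nonneg (n:ℝ)), h3]
                field_simp
    rw [integral_zero] at hDCT
    refine hDCT.congr fun n => ?_
    rw [integral_const_mul]
  -- combine
  have heq : ∀ᶠ n : ℕ in atTop,
      (n : ℂ) * ∫ x, Kfun (s n) x ∂μ - ((σ^2 * t^2 / 2 : ℝ) : ℂ)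
        = (n : ℂ) * (φ (s n) - 1) := by
    filter_upwards [eventually_ge_atTop 1] with n hn
    have hint2 := integral_Kfun μ σ hmean hint hvar (s n)
    rw [hφ (s n)] at *
    rw [hint2]
    have hc : (n : ℂ) * (((s n)^2 * σ^2 / 2 : ℝ) : ℂ) = ((σ^2 * t^2 / 2 : ℝ) : ℂ) := by
      have := hsq n hn
      push_cast
      rw [show ((s n : ℂ))^2 * (σ:ℂ)^2 / 2 = ((s n)^2 : ℂ) * ((σ:ℂ)^2 / 2) by push_cast; ring]
      rw [← mul_assoc, show ((n:ℂ) * ((s n)^2 : ℂ)) = ((t^2 : ℝ) : ℂ) by push_cast [← this]; ring]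
      push_cast; ring
    rw [mul_sub, mul_add, hc]
    ring
  have h5 := (hKlim.sub_const (((σ^2 * t^2 / 2 : ℝ) : ℂ)))
  rw [zero_sub] at h5
  have h6 := h5.congr' heq
  convert h6 using 2
  push_cast
  ring

end main

theorem classical_clt_char_fun (μ : Measure ℝ) [IsProbabilityMeasure μ]
    (σ : ℝ)
    (hmean : ∫ x, x ∂μ = 0)
    (hint : Integrable (fun x => x^2) μ)
    (hvar : ∫ x, x^2 ∂μ = σ^2)
    (φ : ℝ → ℂ) (hφ : ∀ t : ℝ, φ t = ∫ x, Complex.exp ((t : ℂ) * (x : ℂ) * Complex.I) ∂μ) :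
    ∀ t : ℝ, Tendsto (fun n : ℕ => (φ (t / Real.sqrt n))^n) atTop
      (𝓝 (Complex.exp (-((σ^2 * t^2 : ℝ) : ℂ) / 2))) := by
  intro t
  exact tendsto_pow_exp_of_mul_sub_one (key_tendsto μ σ t hmean hint hvar φ hφ)
end

section
/- Comparison of dephasing and pure-loss quantum capacities can fail: there exists a probability density p on [0, 2π) such that log(2π) − h(p) < max{0, log(λ/(1−λ))}, where √λ = |∫₀^{2π} e^{iθ} p(θ) dθ| and h(p) = −∫₀^{2π} p log p is the differential entropy; e.g. for a sufficiently peaked density this strict inequality holds. -/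
open MeasureTheory Real intervalIntegral

lemma cos1_gt_half : (1:ℝ)/2 < Real.cos 1 := by
  have h3 : (3:ℝ) < π := Real.pi_gt_three
  have := Real.cos_lt_cos_of_nonneg_of_le_pi (x := 1) (y := π/3)
    (by norm_num) (by linarith) (by linarith)
  rwa [Real.cos_pi_div_three] at this

lemma cos1_le : Real.cos 1 ≤ 53/96 := by
  have := Real.cos_bound (x := 1) (by norm_num)
  rw [abs_le] at this
  norm_num at this ⊢
  linarith [this.2]

lemma indic_int : (∫ θ in (0:ℝ)..(2 * π),
    (if θ ∈ Set.Ioc (0:ℝ) 1 then (1:ℝ) else 0)) = 1 := by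
  have h2π : (0:ℝ) ≤ 2 * π := by positivity
  rw [intervalIntegral.integral_of_le h2π]
  have : (fun θ : ℝ => if θ ∈ Set.Ioc (0:ℝ) 1 then (1:ℝ) else 0)
      = (Set.Ioc (0:ℝ) 1).indicator (fun _ => (1:ℝ)) := by
    funext θ; simp [Set.indicator]
  rw [this, MeasureTheory.setIntegral_indicator measurableSet_Ioc,
    Set.inter_eq_self_of_subset_right
      (Set.Ioc_subset_Ioc le_rfl (by nlinarith [Real.pi_gt_three]))]
  simp

lemma cplx_int : (∫ θ in (0:ℝ)..(2 * π),
      Complex.exp (θ * Complex.I) * ((if θ ∈ Set.Ioc (0:ℝ) 1 then (1:ℝ) else 0 : ℝ) : ℂ))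
    = (Complex.exp (Complex.I * 1) - Complex.exp (Complex.I * 0)) / Complex.I := by
  have h2π : (0:ℝ) ≤ 2 * π := by positivity
  rw [intervalIntegral.integral_of_le h2π]
  have h1 : (fun θ : ℝ => Complex.exp (θ * Complex.I) *
      ((if θ ∈ Set.Ioc (0:ℝ) 1 then (1:ℝ) else 0 : ℝ) : ℂ))
      = (Set.Ioc (0:ℝ) 1).indicator (fun θ : ℝ => Complex.exp (Complex.I * θ)) := by
    funext θ
    by_cases h : θ ∈ Set.Ioc (0:ℝ) 1 <;> simp [Set.indicator, h, mul_comm]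
  rw [h1, MeasureTheory.setIntegral_indicator measurableSet_Ioc,
    Set.inter_eq_self_of_subset_right
      (Set.Ioc_subset_Ioc le_rfl (by nlinarith [Real.pi_gt_three]))]
  rw [← intervalIntegral.integral_of_le (by norm_num : (0:ℝ) ≤ 1)]
  have := integral_exp_mul_complex (a := 0) (b := 1) (c := Complex.I) Complex.I_ne_zero
  simpa using this

lemma norm_sq_val :
    ‖(Complex.exp (Complex.I * 1) - Complex.exp (Complex.I * 0)) / Complex.I‖^2
      = 2 - 2 * Real.cos 1 := by
  have h1 : Complex.exp (Complex.I * 1) = (Real.cos 1 : ℂ) + (Real.sin 1 : ℂ) * Complex.I := by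
    rw [mul_comm, Complex.exp_mul_I]
    norm_num [Complex.ofReal_cos, Complex.ofReal_sin]
  rw [h1]
  simp only [Complex.exp_zero, mul_zero, Complex.exp_zero]
  rw [norm_div, Complex.norm_I, div_one]
  rw [Complex.sq_norm]
  have h2 : (Real.cos 1 : ℂ) + (Real.sin 1 : ℂ) * Complex.I - 1
      = ((Real.cos 1 - 1 : ℝ) : ℂ) + ((Real.sin 1 : ℝ) : ℂ) * Complex.I := by
    push_cast; ring
  rw [h2, Complex.normSq_add_mul_I]
  nlinarith [Real.sin_sq_add_cos_sq 1]

theorem dephasing_vs_pure_loss_capacity :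
    ∃ p : ℝ → ℝ,
      (∀ θ : ℝ, 0 ≤ p θ) ∧
      (∫ θ in (0:ℝ)..(2 * π), p θ) = 1 ∧
      (1 : ℝ) / 2 < ‖∫ θ in (0:ℝ)..(2 * π), Complex.exp (θ * Complex.I) * (p θ : ℂ)‖^2 ∧
      Real.log (2 * π) - (-∫ θ in (0:ℝ)..(2 * π), p θ * Real.log (p θ)) <
        Real.log ((‖∫ θ in (0:ℝ)..(2 * π), Complex.exp (θ * Complex.I) * (p θ : ℂ)‖^2) /
          (1 - ‖∫ θ in (0:ℝ)..(2 * π), Complex.exp (θ * Complex.I) * (p θ : ℂ)‖^2)) := by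
  refine ⟨fun θ => if θ ∈ Set.Ioc (0:ℝ) 1 then 1 else 0, ?_, indic_int, ?_, ?_⟩
  · intro θ; dsimp only; split <;> norm_num
  · rw [cplx_int, norm_sq_val]
    linarith [cos1_le]
  · have hent : (∫ θ in (0:ℝ)..(2 * π),
        (if θ ∈ Set.Ioc (0:ℝ) 1 then (1:ℝ) else 0) *
          Real.log (if θ ∈ Set.Ioc (0:ℝ) 1 then (1:ℝ) else 0)) = 0 := by
      have : (fun θ : ℝ => (if θ ∈ Set.Ioc (0:ℝ) 1 then (1:ℝ) else 0) *
          Real.log (if θ ∈ Set.Ioc (0:ℝ) 1 then (1:ℝ) else 0)) = fun _ => 0 := by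
        funext θ; split <;> simp
      rw [this]; simp
    rw [cplx_int, norm_sq_val, hent]
    have hc1 := cos1_gt_half
    have hc2 := cos1_le
    have hπ := Real.pi_lt_d2
    have hπ3 := Real.pi_gt_three
    rw [sub_neg_eq_add, add_zero]
    have hlt : 2 * π < (2 - 2 * Real.cos 1) / (1 - (2 - 2 * Real.cos 1)) := by
      rw [lt_div_iff₀ (by linarith)]
      nlinarith
    exact Real.log_lt_log (by positivity) hlt
end

section
/- For p uniform on [0, ε) with 0 < ε < 2π: the dephasing capacity equals log(2π/ε), while λ = (sin(ε/2)/(ε/2))² satisfies log(λ/(1−λ)) → ∞ faster; precisely, log(λ/(1−λ)) − log(2π/ε) → ∞ as ε → 0⁺. -/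
open Filter Topology Real

theorem uniform_dephasing_gap_diverges :
    Tendsto (fun ε : ℝ =>
        Real.log (((2 * Real.sin (ε / 2) / ε)^2) / (1 - (2 * Real.sin (ε / 2) / ε)^2))
          - Real.log (2 * π / ε))
      (𝓝[>] (0 : ℝ)) atTop := by
  have hg : Tendsto (fun ε : ℝ => Real.log 2 - Real.log π - Real.log ε)
      (𝓝[>] (0 : ℝ)) atTop := by
    have h1 : Tendsto (fun ε : ℝ => - Real.log ε) (𝓝[>] (0 : ℝ)) atTop :=
      tendsto_neg_atBot_atTop.comp Real.tendsto_log_nhdsGT_zero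
    have := tendsto_atTop_add_const_left (𝓝[>] (0:ℝ)) (Real.log 2 - Real.log π) h1
    simpa [sub_eq_add_neg] using this
  refine tendsto_atTop_mono' _ ?_ hg
  filter_upwards [Ioo_mem_nhdsGT_of_mem (by norm_num : (0:ℝ) ∈ Set.Ico 0 1)]
    with ε hmem
  obtain ⟨hε0, hε1⟩ := hmem
  set x : ℝ := ε / 2 with hxdef
  have hx0 : 0 < x := by positivity
  have hx1 : x ≤ 1 := by rw [hxdef]; linarith
  have hsinlt : Real.sin x < x := Real.sin_lt hx0
  have hsingt : x - x ^ 3 / 4 < Real.sin x := by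
    have := Real.sin_gt_sub_cube hx0; nlinarith [pow_pos hx0 3]
  set t : ℝ := 2 * Real.sin (ε / 2) / ε with htdef
  have ht_eq : t = Real.sin x / x := by
    rw [htdef, hxdef]; field_simp
  have hx4 : x ^ 2 / 4 ≤ 1 / 4 := by nlinarith
  have ht_lt1 : t < 1 := by
    rw [ht_eq, div_lt_one hx0]; exact hsinlt
  have ht_ge : 1 - x ^ 2 / 4 ≤ t := by
    rw [ht_eq, le_div_iff₀ hx0]
    nlinarith
  have ht_pos : 0 < t := by nlinarith
  have hlam_lt1 : t ^ 2 < 1 := by nlinarith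
  have hlam_ge : (1:ℝ) / 2 ≤ t ^ 2 := by nlinarith
  have h1l_pos : 0 < 1 - t ^ 2 := by linarith
  have h1l_le : 1 - t ^ 2 ≤ ε ^ 2 / 8 := by
    have : x ^ 2 = ε ^ 2 / 4 := by rw [hxdef]; ring
    nlinarith
  -- lower bound the logs
  have hlog1 : Real.log (1 / 2) ≤ Real.log (t ^ 2) :=
    Real.log_le_log (by norm_num) hlam_ge
  have hlog2 : Real.log (1 - t ^ 2) ≤ Real.log (ε ^ 2 / 8) :=
    Real.log_le_log h1l_pos h1l_le
  have hdiv : Real.log (t ^ 2 / (1 - t ^ 2))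
      = Real.log (t ^ 2) - Real.log (1 - t ^ 2) :=
    Real.log_div (by positivity) (ne_of_gt h1l_pos)
  have hkey : Real.log (1 / 2) - Real.log (ε ^ 2 / 8)
      ≤ Real.log (t ^ 2 / (1 - t ^ 2)) := by
    rw [hdiv]; linarith
  -- expand the logs on the RHS
  have hεne : ε ≠ 0 := ne_of_gt hε0
  have hπ : (0:ℝ) < π := Real.pi_pos
  have e1 : Real.log (1 / 2) = - Real.log 2 := by
    rw [Real.log_div one_ne_zero two_ne_zero, Real.log_one]; ring
  have e2 : Real.log (ε ^ 2 / 8) = 2 * Real.log ε - 3 * Real.log 2 := by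
    rw [Real.log_div (by positivity) (by norm_num), Real.log_pow,
      show (8:ℝ) = 2 ^ 3 by norm_num, Real.log_pow]
    push_cast; ring
  have e3 : Real.log (2 * π / ε) = Real.log 2 + Real.log π - Real.log ε := by
    rw [Real.log_div (by positivity) hεne, Real.log_mul two_ne_zero (ne_of_gt hπ)]
  calc Real.log 2 - Real.log π - Real.log ε
      = Real.log (1 / 2) - Real.log (ε ^ 2 / 8) - Real.log (2 * π / ε) := by
        rw [e1, e2, e3]; ring
    _ ≤ Real.log (t ^ 2 / (1 - t ^ 2)) - Real.log (2 * π / ε) := by linarith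
end
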